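/- Completeness of the sumcheck protocol: for any sumcheck instance (H, p, v) with v = ∑_{σ : vars p → H} eval p σ, H nonempty, and any ordering of the variables of p as a duplicate-free list, the recursively defined sumcheck interaction between the honest prover and the verifier accepts for every choice of verifier randomness. -/

import Mathlib

open MvPolynomial

/-- Partially evaluate `p` under a partial substitution `σ`. -/
noncomputable def inst {V R : Type*} [CommRing R]
    (p : MvPolynomial V R) (σ : V → Option R) : MvPolynomial V R :=
  aeval (fun x => (σ x).elim (X x) C) p

/-- Evaluate `p` fully, using `σ` where defined and `0` as a default elsewhere. -/
noncomputable def evalSubst {V R : Type*} [CommRing R]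
    (p : MvPolynomial V R) (σ : V → Option R) : R :=
  eval (fun x => (σ x).getD 0) p

/-- `ρ` overridden by `σ` (with `σ` taking priority on its domain). -/
def override {V R : Type*} (ρ σ : V → Option R) : V → Option R :=
  fun x => (σ x).elim (ρ x) some

/-- The partial substitution with domain `W` determined by a function `f : W → H`. -/
def toSubst {V R : Type*} [DecidableEq V] (W : Finset V) (H : Finset R)
    (f : ↥W → ↥H) : V → Option R :=
  fun x => if h : x ∈ W then some ((f ⟨x, h⟩ : ↥H) : R) else none

/-- The singleton substitution `[x ↦ r]`. -/
def single {V R : Type*} [DecidableEq V] (x : V) (r : R) : V → Option R :=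
  fun y => if y = x then some r else none

/-- A (possibly dishonest) deterministic prover: given the current sumcheck instance
`(H, p, v)`, the current variable, the remaining variables, the last randomness, and
its state, it returns a claimed univariate polynomial and a new state. -/
abbrev Prover (V F S : Type*) [CommRing F] : Type _ :=
  (Finset F × MvPolynomial V F × F) → V → List V → F → S → MvPolynomial V F × S

/-- The recursively defined sumcheck interaction: returns the verifier's verdict. -/
noncomputable def sumcheck {V F S : Type*} [CommRing F] [DecidableEq V]
    (pr : Prover V F S) :
    S → Finset F → MvPolynomial V F → F → F → List (V × F) → Prop
  | s, _H, p, v, _r, [] => v = evalSubst p (fun _ => none)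
  | s, H, p, v, r, (x, r') :: rm =>
      let res := pr (H, p, v) x (rm.map Prod.fst) r s
      (↑res.1.vars : Set V) ⊆ {x} ∧
      res.1.totalDegree ≤ p.totalDegree ∧
      v = ∑ h ∈ H, evalSubst res.1 (single x h) ∧
      sumcheck pr res.2 H (inst p (single x r')) (evalSubst res.1 (single x r')) r' rm

/-- The honest prover of the sumcheck protocol. -/
noncomputable def honestProver {V F : Type*} [CommRing F] [DecidableEq V] :
    Prover V F Unit :=
  fun I x xs _ _ => (∑ f : (↥xs.toFinset → ↥I.1), inst I.2.1 (toSubst xs.toFinset I.1 f), ())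

section Lemmas
variable {V R : Type*} [CommRing R]

lemma eval_congr_vars (p : MvPolynomial V R) (f g : V → R)
    (h : ∀ y ∈ p.vars, f y = g y) : eval f p = eval g p := by
  show eval₂ (RingHom.id R) f p = eval₂ (RingHom.id R) g p
  apply eval₂_congr
  intro i c hic hc
  exact h i ((mem_vars i).mpr ⟨c, mem_support_iff.mpr hc, hic⟩)

lemma evalSubst_inst (p : MvPolynomial V R) (σ τ : V → Option R) :
    evalSubst (inst p σ) τ = evalSubst p (override τ σ) := by
  unfold evalSubst inst
  rw [aeval_eq_bind₁]
  show eval₂Hom (RingHom.id R) _ (bind₁ _ p) = eval₂Hom (RingHom.id R) _ p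
  rw [eval₂Hom_bind₁]
  have : (fun i => (eval₂Hom (RingHom.id R) fun x => (τ x).getD 0) ((σ i).elim (X i) ⇑C))
      = fun x => ((override τ σ x).getD 0) := by
    funext i
    cases h : σ i <;> simp [h, override]
  rw [this]

lemma vars_inst [Nontrivial R] {p : MvPolynomial V R} {σ : V → Option R} {y : V}
    (hy : y ∈ (inst p σ).vars) : y ∈ p.vars ∧ σ y = none := by
  unfold inst at hy
  rw [aeval_eq_bind₁] at hy
  obtain ⟨i, hi, hyi⟩ := mem_vars_bind₁ _ _ hy
  cases h : σ i with
  | none =>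
    rw [h] at hyi
    simp only [Option.elim, vars_X, Finset.mem_singleton] at hyi
    subst hyi; exact ⟨hi, h⟩
  | some a =>
    rw [h] at hyi
    simp [Option.elim, vars_C] at hyi

lemma totalDegree_inst [Nontrivial R] (p : MvPolynomial V R) (σ : V → Option R) :
    (inst p σ).totalDegree ≤ p.totalDegree := by
  unfold inst
  conv_lhs => rw [p.as_sum, map_sum]
  refine (totalDegree_finset_sum _ _).trans (Finset.sup_le fun s hs => ?_)
  rw [aeval_monomial]
  refine (totalDegree_mul _ _).trans ?_
  rw [algebraMap_eq, totalDegree_C, zero_add]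
  refine le_trans ?_ (le_totalDegree hs)
  refine (totalDegree_finset_prod _ _).trans ?_
  rw [Finsupp.sum]
  refine Finset.sum_le_sum fun i _ => ?_
  refine (totalDegree_pow _ _).trans ?_
  have : ((σ i).elim (X i) C : MvPolynomial V R).totalDegree ≤ 1 := by
    cases h : σ i <;> simp [Option.elim, totalDegree_C, totalDegree_X]
  calc s i * ((σ i).elim (X i) C : MvPolynomial V R).totalDegree
      ≤ s i * 1 := Nat.mul_le_mul_left _ this
    _ = s i := Nat.mul_one _

end Lemmas

section Split
variable {V : Type*} [DecidableEq V]

/-- Splitting a function on `insert x W'` into its value at `x` and its restriction. -/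
noncomputable def insertEquiv {F : Type*} (H : Finset F) {x : V} {W' : Finset V} (hx : x ∉ W') :
    (↥(insert x W') → ↥H) ≃ ↥H × (↥W' → ↥H) where
  toFun g := (g ⟨x, Finset.mem_insert_self x W'⟩,
    fun y => g ⟨y, Finset.mem_insert_of_mem y.2⟩)
  invFun p := fun y => if hy : (y : V) ∈ W' then p.2 ⟨y, hy⟩ else p.1
  left_inv g := by
    funext y
    by_cases hy : (y : V) ∈ W'
    · simp only [hy, dif_pos]
    · simp only [hy, dif_neg, not_false_iff]
      congr 1
      have : (y : V) = x := by
        rcases Finset.mem_insert.mp y.2 with h | h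
        · exact h
        · exact absurd h hy
      exact Subtype.ext this.symm
  right_inv p := by
    refine Prod.ext ?_ ?_
    · simp [hx]
    · funext y
      simp [y.2]

lemma toSubst_insertEquiv_symm {F : Type*} (H : Finset F) {x : V} {W' : Finset V} (hx : x ∉ W')
    (h : ↥H) (f : ↥W' → ↥H) :
    toSubst (insert x W') H ((insertEquiv H hx).symm (h, f))
      = override (single x (h : F)) (toSubst W' H f) := by
  funext y
  by_cases hy : y ∈ W'
  · have hy' : y ∈ insert x W' := Finset.mem_insert_of_mem hy
    simp [toSubst, override, single, hy, hy', insertEquiv]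
  · by_cases hyx : y = x
    · subst hyx
      simp [toSubst, override, single, hy, insertEquiv]
    · have : y ∉ insert x W' := by simp [hyx, hy]
      simp [toSubst, override, single, hy, hyx, this]

lemma sum_insert_pi {F : Type*} [Field F] (H : Finset F) {x : V} {W' : Finset V} (hx : x ∉ W')
    (G : (V → Option F) → F) :
    ∑ g : (↥(insert x W') → ↥H), G (toSubst (insert x W') H g)
      = ∑ h ∈ H, ∑ f : (↥W' → ↥H), G (override (single x h) (toSubst W' H f)) := by
  rw [← Equiv.sum_comp (insertEquiv H hx).symm
    (fun g => G (toSubst (insert x W') H g)), Fintype.sum_prod_type]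
  rw [← Finset.sum_coe_sort H]
  exact Finset.sum_congr rfl fun h _ => Finset.sum_congr rfl fun f _ => by
    rw [toSubst_insertEquiv_symm H hx]

lemma override_single_comm {F : Type*} {x : V} {W' : Finset V} (hx : x ∉ W') (H : Finset F)
    (r : F) (f : ↥W' → ↥H) :
    override (single x r) (toSubst W' H f) = override (toSubst W' H f) (single x r) := by
  funext y
  by_cases hyx : y = x
  · subst hyx; simp [override, single, toSubst, hx]
  · by_cases hy : y ∈ W' <;> simp [override, single, toSubst, hy, hyx]

end Split

lemma sumcheck_aux {V F : Type*} [Field F] [DecidableEq V] (H : Finset F)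
    (rm : List (V × F)) :
    ∀ (p : MvPolynomial V F) (v r : F),
      (rm.map Prod.fst).Nodup →
      p.vars ⊆ (rm.map Prod.fst).toFinset →
      v = ∑ f : (↥(rm.map Prod.fst).toFinset → ↥H),
            evalSubst p (toSubst (rm.map Prod.fst).toFinset H f) →
      sumcheck honestProver () H p v r rm := by
  induction rm with
  | nil =>
    intro p v r _ _ hv
    simp only [sumcheck]
    rw [hv]
    haveI : IsEmpty (↥((List.map Prod.fst ([] : List (V × F))).toFinset : Finset V)) := by
      simp only [List.map_nil, List.toFinset_nil]
      exact Finset.isEmpty_coe_sort.mpr rfl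
    rw [Fintype.sum_unique]
    have ht : toSubst (List.map Prod.fst ([] : List (V × F))).toFinset H default
        = fun _ => none := by
      funext y
      simp [toSubst]
    rw [ht]
  | cons xr rm ih =>
    obtain ⟨x, r'⟩ := xr
    intro p v r hnodup hvars hv
    simp only [List.map_cons] at hnodup hvars hv
    rw [List.toFinset_cons] at hvars
    rw [List.map_cons, List.toFinset_cons] at hv
    set W' := (rm.map Prod.fst).toFinset with hW'
    rw [List.nodup_cons] at hnodup
    have hx : x ∉ W' := fun h => hnodup.1 (List.mem_toFinset.mp h)
    have hnd : (rm.map Prod.fst).Nodup := hnodup.2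
    simp only [sumcheck, honestProver]
    set q := ∑ f : (↥W' → ↥H), inst p (toSubst W' H f) with hq
    have vars_q : ∀ y ∈ q.vars, y = x := by
      intro y hy
      have := vars_sum_subset (Finset.univ : Finset (↥W' → ↥H))
        (fun f => inst p (toSubst W' H f)) hy
      obtain ⟨f, _, hyf⟩ := Finset.mem_biUnion.mp this
      obtain ⟨hyp, hnone⟩ := vars_inst hyf
      have hyW : y ∉ W' := by
        intro hmem
        simp [toSubst, hmem] at hnone
      rcases Finset.mem_insert.mp (hvars hyp) with h | h
      · exact h
      · exact absurd h hyW
    refine ⟨?_, ?_, ?_, ?_⟩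
    · intro y hy
      exact vars_q y hy
    · exact (totalDegree_finset_sum _ _).trans
        (Finset.sup_le fun f _ => totalDegree_inst p _)
    · rw [hv, sum_insert_pi H hx (fun σ => evalSubst p σ)]
      refine Finset.sum_congr rfl fun h _ => ?_
      rw [hq]
      show _ = eval _ (∑ f : (↥W' → ↥H), inst p (toSubst W' H f))
      rw [map_sum]
      exact Finset.sum_congr rfl fun f _ => (evalSubst_inst p _ _).symm
    · apply ih
      · exact hnd
      · intro y hy
        obtain ⟨hyp, hnone⟩ := vars_inst hy
        have hyx : y ≠ x := by
          intro h; subst h; simp [single] at hnone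
        rcases Finset.mem_insert.mp (hvars hyp) with h | h
        · exact absurd h hyx
        · exact h
      · rw [hq]
        show eval _ (∑ f : (↥W' → ↥H), inst p (toSubst W' H f)) = _
        rw [map_sum]
        refine Finset.sum_congr rfl fun f _ => ?_
        show evalSubst (inst p (toSubst W' H f)) (single x r') = _
        rw [evalSubst_inst, override_single_comm hx, ← evalSubst_inst]

theorem sumcheck_completeness {V F : Type*} [Field F] [DecidableEq V]
    (H : Finset F) (p : MvPolynomial V F) (v : F) (rm : List (V × F)) (r : F) (s : Unit)
    (hv : v = ∑ f : (↥p.vars → ↥H), evalSubst p (toSubst p.vars H f))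
    (hvars : p.vars = (rm.map Prod.fst).toFinset)
    (hnodup : (rm.map Prod.fst).Nodup)
    (hH : H.Nonempty) :
    sumcheck honestProver s H p v r rm := by
  rw [hvars] at hv
  exact sumcheck_aux H rm p v r hnodup (hvars ▸ Finset.Subset.refl _) hv
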